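/- Let X ∈ ℝ^{n×k}, Y ∈ ℝ^{n×ℓ} with k ≤ ℓ, and suppose X, Y, and Y^T X all have full column rank. Let X = Q_X R_X be a thin QR factorization of X (Q_X ∈ ℝ^{n×k} with orthonormal columns, R_X ∈ ℝ^{k×k} upper triangular). Then for the spectral norm, ‖X (Y^T X)^† Y^T‖₂ = ‖(Y^T Q_X)^† Y^T‖₂. -/

import Mathlib

open Matrix

noncomputable section

/-- `B` is the Moore–Penrose pseudoinverse of `A` (the four Penrose conditions). -/
def IsMP {m n : ℕ} (A : Matrix (Fin m) (Fin n) ℝ) (B : Matrix (Fin n) (Fin m) ℝ) : Prop :=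
  A * B * A = A ∧ B * A * B = B ∧ (A * B)ᵀ = A * B ∧ (B * A)ᵀ = B * A

/-- Euclidean norm of a vector. -/
def vecEnorm {a : ℕ} (v : Fin a → ℝ) : ℝ := Real.sqrt (∑ i, (v i) ^ 2)

/-- Spectral (ℓ2 operator) norm of a matrix. -/
def spec {a b : ℕ} (M : Matrix (Fin a) (Fin b) ℝ) : ℝ :=
  sSup {r | ∃ x : Fin b → ℝ, vecEnorm x = 1 ∧ r = vecEnorm (M.mulVec x)}

/-- Selection matrix whose columns are the columns of the identity indexed by `g`. -/
def sel {a b : ℕ} (g : Fin a → Fin b) : Matrix (Fin b) (Fin a) ℝ :=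
  fun i j => if g j = i then 1 else 0

lemma rank_inj {m c : ℕ} (A : Matrix (Fin m) (Fin c) ℝ) (h : A.rank = c) :
    Function.Injective A.mulVec := by
  have hrn := LinearMap.finrank_range_add_finrank_ker A.mulVecLin
  rw [Matrix.rank] at h
  rw [h, Module.finrank_fin_fun] at hrn
  have hker : LinearMap.ker A.mulVecLin = ⊥ := by
    rw [← Submodule.finrank_eq_zero (R := ℝ)]
    omega
  have hinj := LinearMap.ker_eq_bot.mp hker
  simpa [Matrix.coe_mulVecLin] using hinj

lemma rank_cancel {m c p : ℕ} (A : Matrix (Fin m) (Fin c) ℝ) (h : A.rank = c)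
    {M N : Matrix (Fin c) (Fin p) ℝ} (hMN : A * M = A * N) : M = N := by
  have inj := rank_inj A h
  ext i j
  have h1 : A.mulVec (M.mulVec (Pi.single j 1)) = A.mulVec (N.mulVec (Pi.single j 1)) := by
    rw [mulVec_mulVec, mulVec_mulVec, hMN]
  have h2 := congrFun (inj h1) i
  simpa [Matrix.mulVec_single] using h2

lemma mp_unique {m c : ℕ} (A : Matrix (Fin m) (Fin c) ℝ) (B C : Matrix (Fin c) (Fin m) ℝ)
    (hB : IsMP A B) (hC : IsMP A C) : B = C := by
  obtain ⟨b1, b2, b3, b4⟩ := hB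
  obtain ⟨c1, c2, c3, c4⟩ := hC
  have hAB : A * B = A * C := by
    calc A * B = (A * B)ᵀ := b3.symm
      _ = Bᵀ * Aᵀ := by rw [transpose_mul]
      _ = Bᵀ * (A * C * A)ᵀ := by rw [c1]
      _ = Bᵀ * (Aᵀ * (A * C)ᵀ) := by rw [transpose_mul]
      _ = Bᵀ * (Aᵀ * (A * C)) := by rw [c3]
      _ = (Bᵀ * Aᵀ) * (A * C) := by rw [Matrix.mul_assoc]
      _ = (A * B)ᵀ * (A * C) := by rw [transpose_mul]
      _ = (A * B) * (A * C) := by rw [b3]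
      _ = (A * B * A) * C := by simp only [Matrix.mul_assoc]
      _ = A * C := by rw [b1]
  have hBA : B * A = C * A := by
    calc B * A = (B * A)ᵀ := b4.symm
      _ = Aᵀ * Bᵀ := by rw [transpose_mul]
      _ = (A * C * A)ᵀ * Bᵀ := by rw [c1]
      _ = (A * (C * A))ᵀ * Bᵀ := by rw [Matrix.mul_assoc]
      _ = ((C * A)ᵀ * Aᵀ) * Bᵀ := by rw [transpose_mul]
      _ = (C * A) * (Aᵀ * Bᵀ) := by rw [c4, Matrix.mul_assoc]
      _ = (C * A) * (B * A)ᵀ := by rw [transpose_mul]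
      _ = (C * A) * (B * A) := by rw [b4]
      _ = C * (A * B * A) := by simp only [Matrix.mul_assoc]
      _ = C * A := by rw [b1]
  calc B = B * A * B := b2.symm
    _ = B * (A * C) := by rw [Matrix.mul_assoc, hAB]
    _ = (B * A) * C := by rw [Matrix.mul_assoc]
    _ = (C * A) * C := by rw [hBA]
    _ = C := c2

lemma enorm_Q {n k : ℕ} (QX : Matrix (Fin n) (Fin k) ℝ) (hQ : QXᵀ * QX = 1)
    (v : Fin k → ℝ) : vecEnorm (QX.mulVec v) = vecEnorm v := by
  unfold vecEnorm
  congr 1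
  have key : QX.mulVec v ⬝ᵥ QX.mulVec v = v ⬝ᵥ v := by
    calc QX.mulVec v ⬝ᵥ QX.mulVec v
        = (QX.mulVec v) ᵥ* QX ⬝ᵥ v := by rw [dotProduct_mulVec]
      _ = QXᵀ.mulVec (QX.mulVec v) ⬝ᵥ v := by rw [mulVec_transpose]
      _ = (QXᵀ * QX).mulVec v ⬝ᵥ v := by rw [mulVec_mulVec]
      _ = v ⬝ᵥ v := by rw [hQ, Matrix.one_mulVec]
  calc ∑ i, (QX.mulVec v i) ^ 2 = QX.mulVec v ⬝ᵥ QX.mulVec v := by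
        simp [dotProduct, sq]
    _ = v ⬝ᵥ v := key
    _ = ∑ i, (v i) ^ 2 := by simp [dotProduct, sq]

lemma spec_Q {n k p : ℕ} (QX : Matrix (Fin n) (Fin k) ℝ) (hQ : QXᵀ * QX = 1)
    (M : Matrix (Fin k) (Fin p) ℝ) : spec (QX * M) = spec M := by
  unfold spec
  congr 1
  ext r
  constructor
  · rintro ⟨x, hx, rfl⟩
    exact ⟨x, hx, by rw [← mulVec_mulVec, enorm_Q QX hQ]⟩
  · rintro ⟨x, hx, rfl⟩
    exact ⟨x, hx, by rw [← mulVec_mulVec, enorm_Q QX hQ]⟩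

/-- with a thin QR factorization `X = Q_X R_X`, the spectral norm of the
oblique projector simplifies: `‖X (Yᵀ X)† Yᵀ‖₂ = ‖(Yᵀ Q_X)† Yᵀ‖₂`. -/
theorem oblique_projector_norm {n k l : ℕ} (hkl : k ≤ l)
    (X QX : Matrix (Fin n) (Fin k) ℝ) (RX : Matrix (Fin k) (Fin k) ℝ)
    (Y : Matrix (Fin n) (Fin l) ℝ)
    (hQR : X = QX * RX) (hQ : QXᵀ * QX = 1)
    (hRtri : ∀ i j : Fin k, (j : ℕ) < (i : ℕ) → RX i j = 0)
    (hX : X.rank = k) (hY : Y.rank = l) (hYX : (Yᵀ * X).rank = k)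
    (G : Matrix (Fin k) (Fin l) ℝ) (hG : IsMP (Yᵀ * X) G)
    (H : Matrix (Fin k) (Fin l) ℝ) (hH : IsMP (Yᵀ * QX) H) :
    spec (X * G * Yᵀ) = spec (H * Yᵀ) := by
  -- RX is a unit
  have hRX_rank : RX.rank = k := by
    have h1 : X.rank ≤ RX.rank := by rw [hQR]; exact rank_mul_le_right QX RX
    have h2 : RX.rank ≤ k := rank_le_width RX
    omega
  have hRu : IsUnit RX := mulVec_injective_iff_isUnit.mp (rank_inj RX hRX_rank)
  set A : Matrix (Fin l) (Fin k) ℝ := Yᵀ * QX with hA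
  have hAR : Yᵀ * X = A * RX := by rw [hQR, hA, Matrix.mul_assoc]
  obtain ⟨g1, g2, g3, g4⟩ := hG
  -- G * (Yᵀ * X) = 1
  have hGA1 : G * (Yᵀ * X) = 1 := by
    apply rank_cancel (Yᵀ * X) hYX
    rw [Matrix.mul_one, ← Matrix.mul_assoc, g1]
  -- RX * G is an MP of A
  have hRG : IsMP A (RX * G) := by
    have hRGA : (RX * G) * A = 1 := by
      have h1 : (G * A) * RX = 1 := by rw [Matrix.mul_assoc, ← hAR, hGA1]
      have h2 : (RX * (G * A)) * RX = 1 * RX := by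
        rw [Matrix.mul_assoc, h1, Matrix.mul_one, Matrix.one_mul]
      have h3 := hRu.mul_right_cancel h2
      rw [Matrix.mul_assoc]; exact h3
    refine ⟨?_, ?_, ?_, ?_⟩
    · rw [Matrix.mul_assoc, hRGA, Matrix.mul_one]
    · calc RX * G * A * (RX * G) = RX * (G * (A * RX) * G) := by
            simp only [Matrix.mul_assoc]
        _ = RX * G := by rw [← hAR, g2]
    · have : A * (RX * G) = (Yᵀ * X) * G := by rw [← Matrix.mul_assoc, ← hAR]
      rw [this]; exact g3
    · rw [hRGA]; simp
  have hHRG : H = RX * G := mp_unique A H (RX * G) hH hRG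
  have hXG : X * G * Yᵀ = QX * (H * Yᵀ) := by
    rw [hQR, hHRG]
    simp only [Matrix.mul_assoc]
  rw [hXG, spec_Q QX hQ]
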